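/- Let β be a real d×d matrix, α a positive semidefinite real symmetric d×d matrix, and p ≥ 0. For a positive semidefinite real symmetric d×d matrix u, define φ(t,u) = p·log det(I + u σ_t^β(α)) and ψ(t,u) = e^{βᵀt} u (I + σ_t^β(α) u)^{-1} e^{βt}. Then (φ, ψ) satisfy the generalized Riccati equations: for all t ≥ 0, ∂_t φ(t,u) = 2p·tr(α ψ(t,u)) with φ(0,u) = 0, and ∂_t ψ(t,u) = -2 ψ(t,u) α ψ(t,u) + ψ(t,u) β + βᵀ ψ(t,u) with ψ(0,u) = u. -/

import Mathlib

open MeasureTheory Matrix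

/-- The flow `ω_t^β(x) = e^{βt} x e^{βᵀt}` on real `d×d` matrices. -/
noncomputable def omegaFlow {d : ℕ} (β : Matrix (Fin d) (Fin d) ℝ) (t : ℝ)
    (x : Matrix (Fin d) (Fin d) ℝ) : Matrix (Fin d) (Fin d) ℝ :=
  NormedSpace.exp (t • β) * x * (NormedSpace.exp (t • β))ᵀ

/-- The twofold integral `σ_t^β(x) = 2 ∫₀ᵗ ω_s^β(x) ds`, defined entrywise. -/
noncomputable def sigmaFlow {d : ℕ} (β : Matrix (Fin d) (Fin d) ℝ) (t : ℝ)
    (x : Matrix (Fin d) (Fin d) ℝ) : Matrix (Fin d) (Fin d) ℝ :=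
  Matrix.of fun i j => 2 * ∫ s in (0 : ℝ)..t, omegaFlow β s x i j

/-- `φ(t,u) = p · log det (I + u σ_t^β(α))`. -/
noncomputable def wishartPhi {d : ℕ} (β α : Matrix (Fin d) (Fin d) ℝ) (p t : ℝ)
    (u : Matrix (Fin d) (Fin d) ℝ) : ℝ :=
  p * Real.log (1 + u * sigmaFlow β t α).det

/-- `ψ(t,u) = e^{βᵀt} u (I + σ_t^β(α) u)⁻¹ e^{βt}`. -/
noncomputable def wishartPsi {d : ℕ} (β α : Matrix (Fin d) (Fin d) ℝ) (t : ℝ)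
    (u : Matrix (Fin d) (Fin d) ℝ) : Matrix (Fin d) (Fin d) ℝ :=
  NormedSpace.exp (t • βᵀ) * u * (1 + sigmaFlow β t α * u)⁻¹ * NormedSpace.exp (t • β)

namespace WishartAux

attribute [local instance] Matrix.linftyOpNormedRing Matrix.linftyOpNormedAlgebra

variable {d : ℕ}

/-- entry extraction CLM -/
noncomputable def entryCLM (i j : Fin d) : Matrix (Fin d) (Fin d) ℝ →L[ℝ] ℝ :=
  LinearMap.toContinuousLinearMap
    { toFun := fun M => M i j
      map_add' := fun _ _ => rfl
      map_smul' := fun _ _ => rfl }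

theorem entry_hasDerivAt {f : ℝ → Matrix (Fin d) (Fin d) ℝ} {f' : Matrix (Fin d) (Fin d) ℝ}
    {t : ℝ} (h : HasDerivAt f f' t) (i j : Fin d) :
    HasDerivAt (fun s => f s i j) (f' i j) t :=
  (entryCLM i j).hasFDerivAt.comp_hasDerivAt t h

theorem matrix_hasDerivAt {f : ℝ → Matrix (Fin d) (Fin d) ℝ} {f' : Matrix (Fin d) (Fin d) ℝ}
    {t : ℝ} (h : ∀ i j, HasDerivAt (fun s => f s i j) (f' i j) t) :
    HasDerivAt f f' t := by
  have key : HasDerivAt (fun s => ∑ i : Fin d, ∑ j : Fin d, single i j (f s i j))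
      (∑ i : Fin d, ∑ j : Fin d, single i j (f' i j)) t := by
    refine HasDerivAt.fun_sum fun i _ => HasDerivAt.fun_sum fun j _ => ?_
    have key2 : HasDerivAt (fun s => (f s i j) • single i j (1:ℝ))
        ((f' i j) • single i j (1:ℝ)) t := (h i j).smul_const _
    convert key2 using 2 <;> first | rfl | rw [smul_single, smul_eq_mul, mul_one]
  convert key using 1
  · funext s; exact matrix_eq_sum_single (f s)
  · exact matrix_eq_sum_single f'


theorem continuous_omega (β α : Matrix (Fin d) (Fin d) ℝ) :
    Continuous fun s => omegaFlow β s α := by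
  have hexp : Continuous fun s : ℝ => NormedSpace.exp (s • β) :=
    NormedSpace.exp_continuous.comp (continuous_id.smul continuous_const)
  exact (hexp.mul continuous_const).mul (hexp.matrix_transpose)

theorem hasDerivAt_sigma (β α : Matrix (Fin d) (Fin d) ℝ) (t : ℝ) :
    HasDerivAt (fun s => sigmaFlow β s α) ((2:ℝ) • omegaFlow β t α) t := by
  refine matrix_hasDerivAt fun i j => ?_
  have hc : Continuous fun s => omegaFlow β s α i j := by
    have := continuous_omega β α
    exact ((continuous_apply j).comp ((continuous_apply i).comp this))
  have hint : HasDerivAt (fun s => ∫ x in (0:ℝ)..s, omegaFlow β x α i j)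
      (omegaFlow β t α i j) t :=
    intervalIntegral.integral_hasDerivAt_right (hc.intervalIntegrable _ _)
      (hc.stronglyMeasurable.stronglyMeasurableAtFilter) hc.continuousAt
  have := hint.const_mul (2:ℝ)
  simpa [sigmaFlow, smul_eq_mul] using this


theorem omega_posSemidef {β α : Matrix (Fin d) (Fin d) ℝ} (hα : α.PosSemidef) (s : ℝ) :
    (omegaFlow β s α).PosSemidef := by
  have := hα.mul_mul_conjTranspose_same (NormedSpace.exp (s • β))
  simpa [omegaFlow, Matrix.conjTranspose_eq_transpose_of_trivial] using this

theorem sigma_posSemidef {β α : Matrix (Fin d) (Fin d) ℝ} (hα : α.PosSemidef) {t : ℝ}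
    (ht : 0 ≤ t) : (sigmaFlow β t α).PosSemidef := by
  have hc : ∀ i j : Fin d, Continuous fun s => omegaFlow β s α i j := fun i j =>
    (continuous_apply j).comp ((continuous_apply i).comp (continuous_omega β α))
  rw [Matrix.posSemidef_iff_dotProduct_mulVec]
  constructor
  · ext i j
    simp only [Matrix.conjTranspose_apply, sigmaFlow, Matrix.of_apply, star_trivial]
    congr 1
    refine intervalIntegral.integral_congr fun s _ => ?_
    simpa using congrFun (congrFun (omega_posSemidef hα s).1 i) j
  · intro x
    have integ_ij : ∀ i j : Fin d,
        IntervalIntegrable (fun s => x i * (omegaFlow β s α i j * x j)) volume 0 t :=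
      fun i j => (continuous_const.mul ((hc i j).mul continuous_const)).intervalIntegrable _ _
    have key : dotProduct (star x) (sigmaFlow β t α *ᵥ x)
        = 2 * ∫ s in (0:ℝ)..t, dotProduct (star x) (omegaFlow β s α *ᵥ x) := by
      have rhs : (∫ s in (0:ℝ)..t, dotProduct (star x) (omegaFlow β s α *ᵥ x))
          = ∑ i, ∑ j, ∫ s in (0:ℝ)..t, x i * (omegaFlow β s α i j * x j) := by
        simp only [dotProduct, Matrix.mulVec, star_trivial, Finset.mul_sum]
        rw [intervalIntegral.integral_finset_sum]
        · exact Finset.sum_congr rfl fun i _ =>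
            intervalIntegral.integral_finset_sum (fun j _ => integ_ij i j)
        · exact fun i _ => (continuous_finset_sum _ fun j _ =>
            continuous_const.mul ((hc i j).mul continuous_const)).intervalIntegrable _ _
      rw [rhs, Finset.mul_sum]
      simp only [dotProduct, Matrix.mulVec, star_trivial, sigmaFlow, Matrix.of_apply,
        Finset.mul_sum]
      refine Finset.sum_congr rfl fun i _ => ?_
      refine Finset.sum_congr rfl fun j _ => ?_
      rw [intervalIntegral.integral_const_mul, intervalIntegral.integral_mul_const]
      ring
    rw [key]
    have hnn : 0 ≤ ∫ s in (0:ℝ)..t, dotProduct (star x) (omegaFlow β s α *ᵥ x) :=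
      intervalIntegral.integral_nonneg ht (fun s _ => (omega_posSemidef (β := β) hα s).dotProduct_mulVec_nonneg x)
    positivity


theorem det_one_add_pos {S u : Matrix (Fin d) (Fin d) ℝ} (hS : S.PosSemidef)
    (hu : u.PosSemidef) : 0 < (1 + S * u).det := by
  obtain ⟨B, hB⟩ := by
    open scoped MatrixOrder in exact CStarAlgebra.nonneg_iff_eq_star_mul_self.mp hu.nonneg
  rw [Matrix.star_eq_conjTranspose] at hB
  have h1 : (1 + S * u).det = (1 + B * (S * Bᴴ)).det := by
    rw [hB, show S * (Bᴴ * B) = (S * Bᴴ) * B from by rw [mul_assoc],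
      Matrix.det_one_add_mul_comm]
  rw [h1]
  have hpsd : (B * (S * Bᴴ)).PosSemidef := by
    have := hS.mul_mul_conjTranspose_same B
    rwa [mul_assoc] at this
  exact (Matrix.PosDef.one.add_posSemidef hpsd).det_pos

theorem hasDerivAt_matrix_inv {M : ℝ → Matrix (Fin d) (Fin d) ℝ}
    {M' : Matrix (Fin d) (Fin d) ℝ} {t : ℝ} (h : HasDerivAt M M' t) (hM : IsUnit (M t)) :
    HasDerivAt (fun s => (M s)⁻¹) (-((M t)⁻¹ * M' * (M t)⁻¹)) t := by
  obtain ⟨U, hU⟩ := hM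
  have hf := hasFDerivAt_ringInverse (𝕜 := ℝ) U
  rw [hU] at hf
  have hcomp := hf.comp_hasDerivAt t h
  simp only [Matrix.nonsing_inv_eq_ringInverse]
  refine hcomp.congr_deriv ?_
  have hinv : ((U⁻¹ : (Matrix (Fin d) (Fin d) ℝ)ˣ) : Matrix (Fin d) (Fin d) ℝ) = (M t)⁻¹ := by
    rw [← hU, ← Matrix.coe_units_inv]
  simp [hinv, ContinuousLinearMap.mulLeftRight_apply, ← Matrix.nonsing_inv_eq_ringInverse]

theorem cramer_eq_sum_adjugate (A : Matrix (Fin d) (Fin d) ℝ) (b : Fin d → ℝ) (i : Fin d) :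
    Matrix.cramer A b i = ∑ k, b k * A.adjugate i k := by
  have hb : b = ∑ k, Pi.single k (b k) := (Finset.univ_sum_single b).symm
  conv_lhs => rw [hb]
  rw [map_sum]
  rw [Finset.sum_apply]
  refine Finset.sum_congr rfl fun k _ => ?_
  have hsm : (Pi.single k (b k) : Fin d → ℝ) = (b k) • (Pi.single k (1:ℝ) : Fin d → ℝ) := by
    rw [← Pi.single_smul, smul_eq_mul, mul_one]
  rw [hsm, _root_.map_smul]
  have hsingle : Matrix.cramer A (Pi.single k 1) i = A.adjugate i k := by
    have h1 : Matrix.cramer A (Pi.single k 1) i = A.adjugate.transpose k i := by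
      rw [Matrix.adjugate_transpose]
      rw [Matrix.adjugate_apply]
      rw [← Matrix.cramer_transpose_apply]
      rw [Matrix.transpose_transpose]
    rw [h1, Matrix.transpose_apply]
  simp [hsingle, smul_eq_mul]

theorem trace_adjugate_mul (A B : Matrix (Fin d) (Fin d) ℝ) :
    (A.adjugate * B).trace
      = ∑ σ : Equiv.Perm (Fin d), ((Equiv.Perm.sign σ : ℤ) : ℝ) *
          ∑ i, (∏ j ∈ Finset.univ.erase i, A (σ j) j) • B (σ i) i := by
  simp_rw [Finset.mul_sum]
  rw [Finset.sum_comm]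
  have step : ∀ i : Fin d, (∑ σ : Equiv.Perm (Fin d), ((Equiv.Perm.sign σ : ℤ) : ℝ) *
      ((∏ j ∈ Finset.univ.erase i, A (σ j) j) • B (σ i) i))
      = (A.updateCol i (fun k => B k i)).det := by
    intro i
    rw [Matrix.det_apply']
    refine Finset.sum_congr rfl fun σ _ => ?_
    congr 1
    rw [← Finset.mul_prod_erase _ _ (Finset.mem_univ i)]
    rw [Matrix.updateCol_self]
    have : ∀ j ∈ Finset.univ.erase i,
        (A.updateCol i fun k => B k i) (σ j) j = A (σ j) j := by
      intro j hj
      exact Matrix.updateCol_ne (Finset.ne_of_mem_erase hj)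
    rw [Finset.prod_congr rfl this, smul_eq_mul, mul_comm]
  simp_rw [step]
  have : ∀ i : Fin d, (A.updateCol i fun k => B k i).det
      = ∑ k, B k i * A.adjugate i k := by
    intro i
    rw [← Matrix.cramer_apply, cramer_eq_sum_adjugate]
  simp_rw [this]
  rw [Matrix.trace]
  refine Finset.sum_congr rfl fun i _ => ?_
  rw [Matrix.diag_apply, Matrix.mul_apply]
  exact Finset.sum_congr rfl fun k _ => mul_comm _ _

theorem hasDerivAt_det {N : ℝ → Matrix (Fin d) (Fin d) ℝ} {N' : Matrix (Fin d) (Fin d) ℝ}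
    {t : ℝ} (h : HasDerivAt N N' t) :
    HasDerivAt (fun s => (N s).det) (((N t).adjugate * N').trace) t := by
  have hE := fun i j => entry_hasDerivAt h i j
  have main : HasDerivAt
      (fun s => ∑ σ : Equiv.Perm (Fin d), ((Equiv.Perm.sign σ : ℤ) : ℝ) * ∏ i, N s (σ i) i)
      (∑ σ : Equiv.Perm (Fin d), ((Equiv.Perm.sign σ : ℤ) : ℝ) *
        ∑ i, (∏ j ∈ Finset.univ.erase i, N t (σ j) j) • N' (σ i) i) t :=
    HasDerivAt.fun_sum fun σ _ =>
      HasDerivAt.const_mul _ (HasDerivAt.fun_finsetProd fun i _ => hE (σ i) i)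
  rw [trace_adjugate_mul]
  simp_rw [Matrix.det_apply']
  exact main


theorem inv_one_add_comm {S u : Matrix (Fin d) (Fin d) ℝ} (h1 : IsUnit (1 + u * S).det)
    (h2 : IsUnit (1 + S * u).det) : (1 + u * S)⁻¹ * u = u * (1 + S * u)⁻¹ := by
  have h3 : u * (1 + S * u) = (1 + u * S) * u := by noncomm_ring
  calc (1 + u * S)⁻¹ * u
      = (1 + u * S)⁻¹ * (u * ((1 + S * u) * (1 + S * u)⁻¹)) := by
        rw [Matrix.mul_nonsing_inv _ h2, mul_one]
    _ = (1 + u * S)⁻¹ * ((1 + u * S) * (u * (1 + S * u)⁻¹)) := by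
        rw [← mul_assoc u, h3, mul_assoc]
    _ = u * (1 + S * u)⁻¹ := by rw [← mul_assoc, Matrix.nonsing_inv_mul _ h1, one_mul]

theorem sigma_zero (β α : Matrix (Fin d) (Fin d) ℝ) : sigmaFlow β 0 α = 0 := by
  ext i j
  simp [sigmaFlow, intervalIntegral.integral_same]

theorem psi_zero (β α u : Matrix (Fin d) (Fin d) ℝ) : wishartPsi β α 0 u = u := by
  rw [wishartPsi, sigma_zero]
  simp [NormedSpace.exp_zero]

theorem phi_zero (β α u : Matrix (Fin d) (Fin d) ℝ) (p : ℝ) : wishartPhi β α p 0 u = 0 := by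
  rw [wishartPhi, sigma_zero]
  simp

theorem psi_hasDerivAt_matrix {β α : Matrix (Fin d) (Fin d) ℝ} (hα : α.PosSemidef)
    {u : Matrix (Fin d) (Fin d) ℝ} (hu : u.PosSemidef) {t : ℝ} (ht : 0 ≤ t) :
    HasDerivAt (fun s => wishartPsi β α s u)
      (-((2 : ℝ) • (wishartPsi β α t u * α * wishartPsi β α t u)) +
        wishartPsi β α t u * β + βᵀ * wishartPsi β α t u) t := by
  have hSd : HasDerivAt (fun s => sigmaFlow β s α) ((2:ℝ) • omegaFlow β t α) t :=
    hasDerivAt_sigma β α t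
  have hM : HasDerivAt (fun s => 1 + sigmaFlow β s α * u)
      (((2:ℝ) • omegaFlow β t α) * u) t := (hSd.mul_const u).const_add 1
  have hUnit : IsUnit (1 + sigmaFlow β t α * u) :=
    (Matrix.isUnit_iff_isUnit_det _).2
      (isUnit_iff_ne_zero.2 (det_one_add_pos (sigma_posSemidef hα ht) hu).ne')
  have hR : HasDerivAt (fun s => (1 + sigmaFlow β s α * u)⁻¹)
      (-((1 + sigmaFlow β t α * u)⁻¹ * (((2:ℝ) • omegaFlow β t α) * u) *
        (1 + sigmaFlow β t α * u)⁻¹)) t := hasDerivAt_matrix_inv hM hUnit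
  have hF : HasDerivAt (fun s : ℝ => NormedSpace.exp (s • βᵀ))
      (βᵀ * NormedSpace.exp (t • βᵀ)) t := hasDerivAt_exp_smul_const' βᵀ t
  have hE : HasDerivAt (fun s : ℝ => NormedSpace.exp (s • β))
      (NormedSpace.exp (t • β) * β) t := hasDerivAt_exp_smul_const β t
  have hψ := ((hF.mul_const u).mul hR).mul hE
  have htrans : (NormedSpace.exp (t • β))ᵀ = NormedSpace.exp (t • βᵀ) := by
    rw [← Matrix.exp_transpose, Matrix.transpose_smul]
  have hω : omegaFlow β t α
      = NormedSpace.exp (t • β) * α * NormedSpace.exp (t • βᵀ) := by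
    rw [omegaFlow, htrans]
  have hval :
      (βᵀ * NormedSpace.exp (t • βᵀ) * u * (1 + sigmaFlow β t α * u)⁻¹ +
        NormedSpace.exp (t • βᵀ) * u *
          -((1 + sigmaFlow β t α * u)⁻¹ * (((2:ℝ) • omegaFlow β t α) * u) *
            (1 + sigmaFlow β t α * u)⁻¹)) * NormedSpace.exp (t • β) +
        NormedSpace.exp (t • βᵀ) * u * (1 + sigmaFlow β t α * u)⁻¹ *
          (NormedSpace.exp (t • β) * β)
      = -((2 : ℝ) • (wishartPsi β α t u * α * wishartPsi β α t u)) +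
          wishartPsi β α t u * β + βᵀ * wishartPsi β α t u := by
    rw [wishartPsi, hω]
    simp only [smul_mul_assoc, mul_smul_comm, neg_mul, mul_neg, add_mul, mul_assoc]
    abel
  rw [← hval]
  exact hψ


theorem psi_hasDerivAt_entry {β α : Matrix (Fin d) (Fin d) ℝ} (hα : α.PosSemidef)
    {u : Matrix (Fin d) (Fin d) ℝ} (hu : u.PosSemidef) {t : ℝ} (ht : 0 ≤ t) (i j : Fin d) :
    HasDerivAt (fun s => wishartPsi β α s u i j)
      ((-((2 : ℝ) • (wishartPsi β α t u * α * wishartPsi β α t u)) +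
        wishartPsi β α t u * β + βᵀ * wishartPsi β α t u) i j) t :=
  entry_hasDerivAt (psi_hasDerivAt_matrix hα hu ht) i j

theorem phi_hasDerivAt {β α : Matrix (Fin d) (Fin d) ℝ} (hα : α.PosSemidef) (p : ℝ)
    {u : Matrix (Fin d) (Fin d) ℝ} (hu : u.PosSemidef) {t : ℝ} (ht : 0 ≤ t) :
    HasDerivAt (fun s => wishartPhi β α p s u)
      (2 * p * (α * wishartPsi β α t u).trace) t := by
  have hSd : HasDerivAt (fun s => sigmaFlow β s α) ((2:ℝ) • omegaFlow β t α) t :=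
    hasDerivAt_sigma β α t
  have hN : HasDerivAt (fun s => 1 + u * sigmaFlow β s α)
      (u * ((2:ℝ) • omegaFlow β t α)) t := (hSd.const_mul u).const_add 1
  have hdet : HasDerivAt (fun s => (1 + u * sigmaFlow β s α).det)
      (((1 + u * sigmaFlow β t α).adjugate * (u * ((2:ℝ) • omegaFlow β t α))).trace) t :=
    hasDerivAt_det hN
  have hSpsd := sigma_posSemidef (β := β) hα ht
  have hpos : 0 < (1 + u * sigmaFlow β t α).det := det_one_add_pos hu hSpsd
  have hpos' : 0 < (1 + sigmaFlow β t α * u).det := det_one_add_pos hSpsd hu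
  have hlog := (hdet.log hpos.ne').const_mul p
  -- now rewrite the derivative value
  have hadj : (1 + u * sigmaFlow β t α).adjugate
      = (1 + u * sigmaFlow β t α).det • (1 + u * sigmaFlow β t α)⁻¹ := by
    rw [Matrix.inv_def, smul_smul, Ring.inverse_eq_inv', mul_inv_cancel₀ hpos.ne', one_smul]
  have htrans : (NormedSpace.exp (t • β))ᵀ = NormedSpace.exp (t • βᵀ) := by
    rw [← Matrix.exp_transpose, Matrix.transpose_smul]
  have hω : omegaFlow β t α
      = NormedSpace.exp (t • β) * α * NormedSpace.exp (t • βᵀ) := by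
    rw [omegaFlow, htrans]
  have hcomm : (1 + u * sigmaFlow β t α)⁻¹ * u = u * (1 + sigmaFlow β t α * u)⁻¹ :=
    inv_one_add_comm (isUnit_iff_ne_zero.2 hpos.ne') (isUnit_iff_ne_zero.2 hpos'.ne')
  have hkey : ((1 + u * sigmaFlow β t α)⁻¹ * (u * omegaFlow β t α)).trace
      = (α * wishartPsi β α t u).trace := by
    rw [hω, wishartPsi, ← mul_assoc, hcomm]
    rw [show u * (1 + sigmaFlow β t α * u)⁻¹ *
        (NormedSpace.exp (t • β) * α * NormedSpace.exp (t • βᵀ))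
        = (u * (1 + sigmaFlow β t α * u)⁻¹ * NormedSpace.exp (t • β) * α) *
          NormedSpace.exp (t • βᵀ) from by simp only [mul_assoc]]
    rw [Matrix.trace_mul_comm]
    rw [Matrix.trace_mul_comm α]
    simp only [mul_assoc]
  have hval : p * ((((1 + u * sigmaFlow β t α).adjugate *
      (u * ((2:ℝ) • omegaFlow β t α))).trace) / (1 + u * sigmaFlow β t α).det)
      = 2 * p * (α * wishartPsi β α t u).trace := by
    rw [hadj, Matrix.smul_mul, Matrix.trace_smul, mul_smul_comm, Matrix.mul_smul,
      Matrix.trace_smul, hkey]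
    field_simp
    ring
  rw [← hval]
  exact hlog

end WishartAux

/-- The functions `(φ, ψ)` satisfy the generalized Riccati equations
`∂ₜ φ(t,u) = 2p tr (α ψ(t,u))`, `φ(0,u) = 0`, and
`∂ₜ ψ(t,u) = -2 ψ(t,u) α ψ(t,u) + ψ(t,u) β + βᵀ ψ(t,u)`, `ψ(0,u) = u`. -/
theorem wishart_riccati_equations {d : ℕ} (β : Matrix (Fin d) (Fin d) ℝ)
    (α : Matrix (Fin d) (Fin d) ℝ) (hα : α.PosSemidef) (p : ℝ) (hp : 0 ≤ p)
    (u : Matrix (Fin d) (Fin d) ℝ) (hu : u.PosSemidef) :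
    wishartPhi β α p 0 u = 0 ∧ wishartPsi β α 0 u = u ∧
      (∀ t : ℝ, 0 ≤ t →
        HasDerivAt (fun s => wishartPhi β α p s u)
          (2 * p * (α * wishartPsi β α t u).trace) t) ∧
      (∀ t : ℝ, 0 ≤ t → ∀ i j,
        HasDerivAt (fun s => wishartPsi β α s u i j)
          ((-((2 : ℝ) • (wishartPsi β α t u * α * wishartPsi β α t u)) +
              wishartPsi β α t u * β + βᵀ * wishartPsi β α t u) i j) t) := by
  exact ⟨WishartAux.phi_zero β α u p, WishartAux.psi_zero β α u,
    fun _ ht => WishartAux.phi_hasDerivAt hα p hu ht,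
    fun _ ht i j => WishartAux.psi_hasDerivAt_entry hα hu ht i j⟩
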